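/- Let Q be a lattice path from (0,0) to (m,r) and let M[Q] be the generalized Catalan matroid with lower bounding path E^m N^r and upper bounding path Q. A subset C of [m+r] is a circuit of M[Q] if and only if, letting i be the largest element of C and P(C) the lattice path whose North steps occur exactly at the positions in C, the i-th step of P(C) is the unique North step of P(C) that lies above Q. -/

import Mathlib

/-- `X` is a partial transversal of the interval system `(N_j = [lo j, hi j])_{j : Fin r}`:
there is an injective assignment of the elements of `X` to distinct indices `j` with
`lo j ≤ x ≤ hi j`. -/
def IsPT (r : ℕ) (lo hi : Fin r → ℕ) (X : Finset ℕ) : Prop :=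
  ∃ f : X → Fin r, Function.Injective f ∧ ∀ x : X, lo (f x) ≤ (x : ℕ) ∧ (x : ℕ) ≤ hi (f x)

namespace Stmt8Aux

open Finset

open Finset

lemma lo_le_of_lt {r : ℕ} {Q : Finset ℕ} (hQ : Q.card = r) {j : Fin r} {x : ℕ}
    (h : (j : ℕ) < (Q.filter (· ≤ x)).card) : (Q.orderIsoOfFin hQ j : ℕ) ≤ x := by
  by_contra hx
  push_neg at hx
  have hsub : Q.filter (· ≤ x) ⊆ (Finset.Iio j).image (fun k : Fin r => ((Q.orderIsoOfFin hQ k : ℕ))) := by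
    intro q hq
    rw [mem_filter] at hq
    obtain ⟨hqQ, hqx⟩ := hq
    set k := (Q.orderIsoOfFin hQ).symm ⟨q, hqQ⟩ with hk
    have hiso : ((Q.orderIsoOfFin hQ k : ℕ)) = q := by
      simp [hk]
    have hkj : k < j := by
      by_contra hkj
      push_neg at hkj
      have := (Q.orderIsoOfFin hQ).monotone hkj
      have : (Q.orderIsoOfFin hQ j : ℕ) ≤ (Q.orderIsoOfFin hQ k : ℕ) := this
      omega
    exact mem_image.mpr ⟨k, Finset.mem_Iio.mpr hkj, hiso⟩
  have := card_le_card hsub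
  have h2 := Finset.card_image_le (s := Finset.Iio j) (f := fun k : Fin r => ((Q.orderIsoOfFin hQ k : ℕ)))
  rw [Fin.card_Iio] at h2
  omega

lemma lt_of_lo_le {r : ℕ} {Q : Finset ℕ} (hQ : Q.card = r) {j : Fin r} {x : ℕ}
    (h : (Q.orderIsoOfFin hQ j : ℕ) ≤ x) : (j : ℕ) < (Q.filter (· ≤ x)).card := by
  have hsub : (Finset.Iic j).image (fun k : Fin r => ((Q.orderIsoOfFin hQ k : ℕ))) ⊆ Q.filter (· ≤ x) := by
    intro q hq
    rw [mem_image] at hq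
    obtain ⟨k, hk, rfl⟩ := hq
    rw [Finset.mem_Iic] at hk
    have hmono : (Q.orderIsoOfFin hQ k : ℕ) ≤ (Q.orderIsoOfFin hQ j : ℕ) :=
      (Q.orderIsoOfFin hQ).monotone hk
    exact mem_filter.mpr ⟨(Q.orderIsoOfFin hQ k).2, le_trans hmono h⟩
  have hcard := card_le_card hsub
  rw [Finset.card_image_of_injective _ (fun a b hab => (Q.orderIsoOfFin hQ).injective (Subtype.ext hab)),
    Fin.card_Iic] at hcard
  omega


lemma isPT_iff (m r : ℕ) (Q : Finset ℕ) (hQs : Q ⊆ Finset.Icc 1 (m + r)) (hQ : Q.card = r)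
    (X : Finset ℕ) (hXs : X ⊆ Finset.Icc 1 (m + r)) :
    IsPT r (fun j => (Q.orderIsoOfFin hQ j : ℕ)) (fun j => m + (j : ℕ) + 1) X ↔
      X.card ≤ r ∧ ∀ x ∈ X, (X.filter (· ≤ x)).card ≤ (Q.filter (· ≤ x)).card := by
  constructor
  · rintro ⟨f, hinj, hbd⟩
    constructor
    · have := Fintype.card_le_of_injective f hinj
      simpa using this
    · intro x hx
      apply card_le_card_of_injOn (fun c => if hc : c ∈ X then (Q.orderIsoOfFin hQ (f ⟨c, hc⟩) : ℕ) else 0)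
      · intro c hc
        rw [mem_coe, mem_filter] at hc ⊢
        obtain ⟨hcX, hcx⟩ := hc
        dsimp only
        rw [dif_pos hcX]
        exact ⟨(Q.orderIsoOfFin hQ (f ⟨c, hcX⟩)).2, le_trans (hbd ⟨c, hcX⟩).1 hcx⟩
      · intro a ha b hb hab
        rw [mem_coe, mem_filter] at ha hb
        dsimp only at hab
        rw [dif_pos ha.1, dif_pos hb.1] at hab
        have h1 : (⟨a, ha.1⟩ : {x // x ∈ X}) = ⟨b, hb.1⟩ := hinj ((Q.orderIsoOfFin hQ).injective (Subtype.ext hab))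
        exact congrArg Subtype.val h1
  · rintro ⟨hcard, hfil⟩
    by_cases hX : X.Nonempty
    · have hk : 0 < X.card := card_pos.mpr hX
      have hr : 0 < r := lt_of_lt_of_le hk hcard
      set e := X.orderIsoOfFin rfl with he
      have hbound : ∀ c : X, max ((e.symm c : ℕ)) ((c : ℕ) - (m + 1)) < r := by
        intro c
        have h1 : ((e.symm c : ℕ)) < X.card := (e.symm c).2
        have h2 : (c : ℕ) ≤ m + r := (Finset.mem_Icc.mp (hXs c.2)).2
        omega
      refine ⟨fun c => ⟨max ((e.symm c : ℕ)) ((c : ℕ) - (m + 1)), hbound c⟩, ?_, ?_⟩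
      · intro a b hab
        rw [Fin.mk.injEq] at hab
        rcases lt_trichotomy (a : ℕ) (b : ℕ) with h | h | h
        · exfalso
          have hs : e.symm a < e.symm b := e.symm.strictMono (Subtype.coe_lt_coe.mp h)
          have hs' : ((e.symm a : ℕ)) < ((e.symm b : ℕ)) := hs
          omega
        · exact Subtype.ext h
        · exfalso
          have hs : e.symm b < e.symm a := e.symm.strictMono (Subtype.coe_lt_coe.mp h)
          have hs' : ((e.symm b : ℕ)) < ((e.symm a : ℕ)) := hs
          omega
      · intro c
        constructor
        · -- lower bound: lo (f c) ≤ c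
          apply lo_le_of_lt hQ
          simp only
          -- need max (e.symm c) (c - (m+1)) < (Q.filter (· ≤ c)).card
          have hA : ((e.symm c : ℕ)) + 1 ≤ (X.filter (· ≤ (c : ℕ))).card := by
            have hsub : (Finset.Iic (e.symm c)).image (fun k => ((e k : ℕ))) ⊆ X.filter (· ≤ (c : ℕ)) := by
              intro q hq
              rw [mem_image] at hq
              obtain ⟨k, hk, rfl⟩ := hq
              rw [Finset.mem_Iic] at hk
              have : (e k : ℕ) ≤ ((e (e.symm c)) : ℕ) := e.monotone hk
              rw [e.apply_symm_apply] at this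
              exact mem_filter.mpr ⟨(e k).2, this⟩
            have := card_le_card hsub
            rwa [Finset.card_image_of_injective _ (fun a b hab => e.injective (Subtype.ext hab)),
              Fin.card_Iic] at this
          have hAB := hfil (c : ℕ) c.2
          have hB2 : r ≤ (Q.filter (· ≤ (c : ℕ))).card + (m + r - (c : ℕ)) := by
            have hsplit := Finset.card_filter_add_card_filter_not (s := Q) (p := (· ≤ (c : ℕ)))
            have hsub2 : Q.filter (fun q => ¬ q ≤ (c : ℕ)) ⊆ Finset.Icc ((c : ℕ) + 1) (m + r) := by
              intro q hq
              rw [mem_filter] at hq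
              have := Finset.mem_Icc.mp (hQs hq.1)
              rw [Finset.mem_Icc]
              omega
            have := card_le_card hsub2
            rw [Nat.card_Icc] at this
            omega
          have hc2 : (c : ℕ) ≤ m + r := (Finset.mem_Icc.mp (hXs c.2)).2
          omega
        · -- upper bound
          have : (c : ℕ) - (m + 1) ≤ max ((e.symm c : ℕ)) ((c : ℕ) - (m + 1)) := le_max_right _ _
          simp only
          omega
    · rw [not_nonempty_iff_eq_empty] at hX
      subst hX
      exact ⟨fun c => (Finset.notMem_empty _ c.2).elim, fun a => (Finset.notMem_empty _ a.2).elim,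
        fun c => (Finset.notMem_empty _ c.2).elim⟩


lemma eraseA {C : Finset ℕ} {x : ℕ} (hx : x ∈ C) (y : ℕ) :
    ((C.erase x).filter (· ≤ y)).card =
      if x ≤ y then (C.filter (· ≤ y)).card - 1 else (C.filter (· ≤ y)).card := by
  rw [Finset.filter_erase]
  split_ifs with h
  · exact Finset.card_erase_of_mem (Finset.mem_filter.mpr ⟨hx, h⟩)
  · rw [Finset.erase_eq_of_notMem]
    intro hmem
    exact h (Finset.mem_filter.mp hmem).2


end Stmt8Aux

open Finset Stmt8Aux

/-- **Circuits of generalized Catalan matroids.**  Let `Q ⊆ [1, m+r]` (with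
`|Q| = r`) be the North-step positions of the upper bounding path of the generalized
Catalan matroid `M[Q]` (whose lower path is `E^m N^r`, giving the interval system
`N_j = [l_j, m + j]` where `l_j` is the position of the `j`-th North step of `Q`);
independent sets are partial transversals, and a circuit is a minimal non-independent
set.  Then `C ⊆ [1, m+r]` is a circuit of `M[Q]` if and only if there is `i ∈ C`
that is the largest element of `C` and such that, for `x ∈ C`, the North step of
the path `P(C)` at position `x` lies strictly above `Q` (i.e. the number of elements
of `C` that are `≤ x` exceeds the number of North steps of `Q` at positions `≤ x`)
exactly when `x = i`. -/
theorem stmt8 (m r : ℕ) (Q : Finset ℕ)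
    (hQs : Q ⊆ Finset.Icc 1 (m + r)) (hQ : Q.card = r)
    (C : Finset ℕ) (hCs : C ⊆ Finset.Icc 1 (m + r)) :
    (¬ IsPT r (fun j => (Q.orderIsoOfFin hQ j : ℕ)) (fun j => m + (j : ℕ) + 1) C ∧
      ∀ x ∈ C, IsPT r (fun j => (Q.orderIsoOfFin hQ j : ℕ)) (fun j => m + (j : ℕ) + 1)
        (C.erase x))
    ↔ ∃ i ∈ C, (∀ x ∈ C, x ≤ i) ∧
        ∀ x ∈ C, ((Q.filter (· ≤ x)).card < (C.filter (· ≤ x)).card ↔ x = i) := by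
  constructor
  · rintro ⟨hnot, hall⟩
    rw [isPT_iff m r Q hQs hQ C hCs] at hnot
    have hall' : ∀ x ∈ C, (C.erase x).card ≤ r ∧
        ∀ y ∈ C.erase x, ((C.erase x).filter (· ≤ y)).card ≤ (Q.filter (· ≤ y)).card :=
      fun x hx => (isPT_iff m r Q hQs hQ _ ((erase_subset x C).trans hCs)).mp (hall x hx)
    have hne : C.Nonempty := by
      by_contra h
      rw [not_nonempty_iff_eq_empty] at h
      subst h
      exact hnot ⟨by simp, by simp⟩
    set i := C.max' hne with hi
    have hiC : i ∈ C := C.max'_mem hne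
    have himax : ∀ x ∈ C, x ≤ i := fun x hx => C.le_max' x hx
    have hkey : ∀ x ∈ C, x ≠ i → (C.filter (· ≤ x)).card ≤ (Q.filter (· ≤ x)).card := by
      intro x hx hxi
      have h := (hall' i hiC).2 x (mem_erase.mpr ⟨hxi, hx⟩)
      rw [eraseA hiC x] at h
      have hxle : x ≤ i := himax x hx
      rw [if_neg (by omega)] at h
      exact h
    have hAi : (C.filter (· ≤ i)).card = C.card := by
      rw [Finset.filter_true_of_mem himax]
    have hBi_lt : (Q.filter (· ≤ i)).card < C.card := by
      by_cases hc : C.card ≤ r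
      · have h2 : ¬ ∀ x ∈ C, (C.filter (· ≤ x)).card ≤ (Q.filter (· ≤ x)).card :=
          fun h => hnot ⟨hc, h⟩
        push_neg at h2
        obtain ⟨x, hx, hv⟩ := h2
        have hxi : x = i := by
          by_contra hxi
          exact absurd (hkey x hx hxi) (not_le.mpr hv)
        subst hxi
        omega
      · have hBr : (Q.filter (· ≤ i)).card ≤ r := by
          have := card_le_card (filter_subset (· ≤ i) Q)
          omega
        omega
    refine ⟨i, hiC, himax, ?_⟩
    intro x hx
    constructor
    · intro hlt
      by_contra hxi
      exact absurd hlt (not_lt.mpr (hkey x hx hxi))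
    · rintro rfl
      omega
  · rintro ⟨i, hiC, himax, hiff⟩
    have hBi : (Q.filter (· ≤ i)).card < (C.filter (· ≤ i)).card := (hiff i hiC).mpr rfl
    have hAi : (C.filter (· ≤ i)).card = C.card := by
      rw [Finset.filter_true_of_mem himax]
    have hkey : ∀ x ∈ C, x ≠ i → (C.filter (· ≤ x)).card ≤ (Q.filter (· ≤ x)).card := by
      intro x hx hxi
      by_contra h
      exact hxi ((hiff x hx).mp (not_le.mp h))
    have hBmono : C.card - 1 ≤ (Q.filter (· ≤ i)).card := by
      by_cases hsing : C.erase i = ∅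
      · have : C.card ≤ 1 := by
          have : C ⊆ {i} := by
            intro q hq
            rw [Finset.mem_singleton]
            by_contra hqi
            exact (Finset.notMem_empty q) (hsing ▸ Finset.mem_erase.mpr ⟨hqi, hq⟩)
          calc C.card ≤ ({i} : Finset ℕ).card := card_le_card this
            _ = 1 := card_singleton i
        omega
      · have hne' : (C.erase i).Nonempty := nonempty_iff_ne_empty.mpr hsing
        set i' := (C.erase i).max' hne' with hi'
        have hi'm : i' ∈ C.erase i := (C.erase i).max'_mem hne'
        obtain ⟨hi'ne, hi'C⟩ := Finset.mem_erase.mp hi'm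
        have hi'lt : i' < i := lt_of_le_of_ne (himax i' hi'C) hi'ne
        have hfe : C.filter (· ≤ i') = C.erase i := by
          ext q
          rw [mem_filter, mem_erase]
          constructor
          · rintro ⟨hqC, hq⟩
            exact ⟨by omega, hqC⟩
          · rintro ⟨hqi, hqC⟩
            exact ⟨hqC, (C.erase i).le_max' q (mem_erase.mpr ⟨hqi, hqC⟩)⟩
        have hA' : (C.filter (· ≤ i')).card = C.card - 1 := by
          rw [hfe, card_erase_of_mem hiC]
        have h1 := hkey i' hi'C hi'ne
        have h2 : (Q.filter (· ≤ i')).card ≤ (Q.filter (· ≤ i)).card := by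
          apply card_le_card
          intro q hq
          rw [mem_filter] at hq ⊢
          exact ⟨hq.1, by omega⟩
        omega
    have hBr : (Q.filter (· ≤ i)).card ≤ r := by
      have := card_le_card (filter_subset (· ≤ i) Q)
      omega
    constructor
    · rw [isPT_iff m r Q hQs hQ C hCs]
      rintro ⟨h1, h2⟩
      exact absurd hBi (not_lt.mpr (h2 i hiC))
    · intro x hx
      rw [isPT_iff m r Q hQs hQ _ ((erase_subset x C).trans hCs)]
      refine ⟨?_, ?_⟩
      · rw [card_erase_of_mem hx]
        omega
      · intro y hy
        rw [eraseA hx y]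
        obtain ⟨hyx, hyC⟩ := Finset.mem_erase.mp hy
        by_cases hyi : y = i
        · subst hyi
          have hxi : x ≠ y := fun h => hyx h.symm
          have hxle : x ≤ y := himax x hx
          rw [if_pos hxle]
          omega
        · have := hkey y hyC hyi
          split_ifs <;> omega
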